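/- For all integers i, j with 0 ≤ i ≤ j, Σ_{k=i}^{j} (−1)^{j+k} · (2k/(k+i)) · C(k+i, 2i) · C(2j, k+j) equals 1 if i = j and 0 otherwise, with the convention 2k/(k+i) = 1 when i = k = 0. -/

import Mathlib

open Finset fwdDiff

/-- The binomial polynomial `x ↦ x(x-1)...(x-n+1)/n!` as a function `ℤ → ℚ`. -/
noncomputable def bi (n : ℕ) : ℤ → ℚ :=
  fun x => (∏ t ∈ Finset.range n, ((x : ℚ) - t)) / n.factorial

lemma bi_zero (x : ℤ) : bi 0 x = 1 := by simp [bi]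

lemma fwdDiff_bi (n : ℕ) : Δ_[(1:ℤ)] (bi (n+1)) = bi n := by
  ext x
  have hfac : ((n+1).factorial : ℚ) = (n+1) * n.factorial := by
    rw [Nat.factorial_succ]; push_cast; ring
  have h1 : (∏ t ∈ Finset.range (n+1), (((x+1 : ℤ) : ℚ) - t)) =
      (∏ t ∈ Finset.range n, ((x : ℚ) - t)) * ((x:ℚ) + 1) := by
    rw [Finset.prod_range_succ']
    congr 1
    · apply Finset.prod_congr rfl; intro t _; push_cast; ring
    · push_cast; ring
  have h2 : (∏ t ∈ Finset.range (n+1), ((x : ℚ) - t)) =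
      (∏ t ∈ Finset.range n, ((x : ℚ) - t)) * ((x:ℚ) - n) := by
    rw [Finset.prod_range_succ]
  simp only [fwdDiff, bi, h1, h2, hfac]
  have hn : (n.factorial : ℚ) ≠ 0 := by exact_mod_cast n.factorial_ne_zero
  have hn1 : ((n:ℚ)+1) ≠ 0 := by positivity
  field_simp
  ring

lemma fwdDiff_iter_bi (k m : ℕ) : (Δ_[(1:ℤ)])^[k] (bi (k+m)) = bi m := by
  induction k generalizing m with
  | zero => simp
  | succ k IH =>
    rw [Function.iterate_succ_apply', (by ring : k + 1 + m = k + (m+1)), IH, fwdDiff_bi]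

lemma fwdDiff_zero_fun : Δ_[(1:ℤ)] (fun _ => (0:ℚ)) = fun _ => (0:ℚ) := by
  ext x; simp [fwdDiff]

lemma fwdDiff_iter_bi_zero (n m : ℕ) (h : m < n) : (Δ_[(1:ℤ)])^[n] (bi m) = fun _ => 0 := by
  obtain ⟨s, rfl⟩ : ∃ s, n = s + 1 + m := ⟨n - 1 - m, by omega⟩
  rw [Function.iterate_add_apply, (by rw [add_zero] : bi m = bi (m + 0)),
    fwdDiff_iter_bi m 0]
  have h0 : Δ_[(1:ℤ)] (bi 0) = fun _ => (0:ℚ) := by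
    ext x; simp [bi_zero, fwdDiff]
  rw [Function.iterate_succ_apply, h0]
  clear h h0
  induction s with
  | zero => simp
  | succ s IH => rw [Function.iterate_succ_apply, fwdDiff_zero_fun, IH]

lemma bi_eq_zero {n : ℕ} {x : ℤ} (h1 : 0 ≤ x) (h2 : x < n) : bi n x = 0 := by
  rw [bi, div_eq_zero_iff]
  left
  apply Finset.prod_eq_zero (i := x.toNat) (by rw [Finset.mem_range]; omega)
  have : ((x.toNat : ℕ) : ℚ) = ((x : ℤ) : ℚ) := by
    rw [← Int.cast_natCast]; congr 1; omega
  rw [this, sub_self]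

lemma bi_natCast (n a : ℕ) : bi n ((a : ℤ)) = a.choose n := by
  rcases lt_or_ge a n with h | h
  · rw [bi_eq_zero (by positivity) (by exact_mod_cast h), Nat.choose_eq_zero_of_lt h]
    simp
  · have hprod : (∏ t ∈ Finset.range n, (((a:ℤ) : ℚ) - t)) = (a.descFactorial n : ℚ) := by
      rw [Nat.descFactorial_eq_prod_range]
      push_cast
      apply Finset.prod_congr rfl
      intro t ht
      rw [Finset.mem_range] at ht
      have ht' : t ≤ a := le_trans (le_of_lt ht) h
      push_cast [Nat.cast_sub ht']
      ring
    rw [bi, hprod, Nat.descFactorial_eq_factorial_mul_choose]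
    push_cast
    rw [mul_comm, mul_div_assoc, div_self (by exact_mod_cast n.factorial_ne_zero), mul_one]

lemma bi_neg (n : ℕ) (x : ℤ) : bi n (-x) = (-1)^n * bi n (x + n - 1) := by
  rw [bi, bi, mul_div_assoc']
  congr 1
  have h2 : (∏ t ∈ Finset.range n, (((x + n - 1 : ℤ) : ℚ) - t)) =
      ∏ t ∈ Finset.range n, ((x:ℚ) + t) := by
    rw [← Finset.prod_range_reflect (fun t => (x:ℚ) + t) n]
    apply Finset.prod_congr rfl
    intro t ht
    rw [Finset.mem_range] at ht
    push_cast [Nat.cast_sub (by omega : t ≤ n - 1), Nat.cast_sub (by omega : 1 ≤ n)]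
    ring
  have h1 : (∏ t ∈ Finset.range n, (((-x : ℤ) : ℚ) - t)) =
      ∏ t ∈ Finset.range n, ((-1 : ℚ) * ((x:ℚ) + t)) := by
    apply Finset.prod_congr rfl
    intro t _
    push_cast; ring
  rw [h1, h2, Finset.prod_mul_distrib, Finset.prod_const, Finset.card_range]

/-- The coefficient function: `fP i k = C(k+i, 2i) + C(k+i-1, 2i)` extended to `ℤ`. -/
noncomputable def fP (i : ℕ) : ℤ → ℚ :=
  fun x => bi (2*i) (x + i) + bi (2*i) (x + i - 1)

lemma fP_neg (i : ℕ) (x : ℤ) : fP i (-x) = fP i x := by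
  have e1 : -x + (i:ℤ) = -(x - i) := by ring
  have e2 : -(x - (i:ℤ)) - 1 = -(x - i + 1) := by ring
  have hsq : ((-1:ℚ))^(2*i) = 1 := by
    rw [pow_mul]; norm_num
  rw [fP, fP, e1, e2, bi_neg, bi_neg, hsq, one_mul, one_mul]
  have e3 : x - (i:ℤ) + (2*i : ℕ) - 1 = x + i - 1 := by push_cast; ring
  have e4 : x - (i:ℤ) + 1 + (2*i : ℕ) - 1 = x + i := by push_cast; ring
  rw [e3, e4]
  ring

lemma fwdDiff_comp_add' (g : ℤ → ℚ) (c : ℤ) :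
    Δ_[(1:ℤ)] (fun x => g (x + c)) = fun x => Δ_[(1:ℤ)] g (x + c) := by
  ext x
  simp only [fwdDiff]
  rw [add_right_comm]

lemma fwdDiff_iter_comp_add' (g : ℤ → ℚ) (c : ℤ) (n : ℕ) :
    (Δ_[(1:ℤ)])^[n] (fun x => g (x + c)) = fun x => (Δ_[(1:ℤ)])^[n] g (x + c) := by
  induction n generalizing g with
  | zero => simp
  | succ n IH =>
    rw [Function.iterate_succ_apply, fwdDiff_comp_add', IH, ← Function.iterate_succ_apply]

lemma fwdDiff_iter_fP_lt {i j : ℕ} (hij : i < j) (y : ℤ) :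
    (Δ_[(1:ℤ)])^[2*j] (fP i) y = 0 := by
  have h : fP i = (fun x => bi (2*i) (x + i)) + (fun x => bi (2*i) (x + ((i:ℤ) - 1))) := by
    ext x; simp only [fP, Pi.add_apply]; ring_nf
  rw [h, fwdDiff_iter_add, Pi.add_apply, fwdDiff_iter_comp_add', fwdDiff_iter_comp_add',
    fwdDiff_iter_bi_zero (2*j) (2*i) (by omega)]
  simp

lemma fwdDiff_iter_fP_eq (i : ℕ) (y : ℤ) :
    (Δ_[(1:ℤ)])^[2*i] (fP i) y = 2 := by
  have h : fP i = (fun x => bi (2*i) (x + i)) + (fun x => bi (2*i) (x + ((i:ℤ) - 1))) := by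
    ext x; simp only [fP, Pi.add_apply]; ring_nf
  have h2 : bi (2*i) = bi (2*i + 0) := by rw [add_zero]
  rw [h, fwdDiff_iter_add, Pi.add_apply, fwdDiff_iter_comp_add', fwdDiff_iter_comp_add',
    h2, fwdDiff_iter_bi (2*i) 0]
  simp [bi_zero]
  norm_num

lemma key_identity (i k : ℕ) (hik : i ≤ k) (h0 : k + i ≠ 0) :
    ((k+i).choose (2*i) : ℚ) + ((k+i-1).choose (2*i) : ℚ) =
      (2*k)/(k+i) * ((k+i).choose (2*i)) := by
  have hnat : (k+i-1).choose (2*i) * (k+i) = (k+i).choose (2*i) * (k - i) := by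
    have h := Nat.choose_mul_succ_eq (k+i-1) (2*i)
    rw [Nat.sub_add_cancel (by omega)] at h
    rw [h]
    congr 1
    omega
  have hq : ((k+i-1).choose (2*i) : ℚ) * (k+i) = ((k+i).choose (2*i) : ℚ) * ((k:ℚ) - i) := by
    have := congrArg (fun n : ℕ => (n : ℚ)) hnat
    push_cast [Nat.cast_sub hik] at this
    exact this
  have hne : ((k:ℚ) + i) ≠ 0 := by
    have h1 : 0 < k + i := Nat.pos_of_ne_zero h0
    have h2 : (0:ℚ) < (k:ℚ) + i := by exact_mod_cast h1
    exact ne_of_gt h2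
  field_simp
  nlinarith [hq]

lemma fP_natCast (i k : ℕ) (hik : i ≤ k) :
    fP i ((k:ℤ)) = if k + i = 0 then (2:ℚ)
      else (2*k)/(k+i) * ((k+i).choose (2*i)) := by
  rcases Nat.eq_zero_or_pos (k+i) with h0 | h0
  · have hk : k = 0 := by omega
    have hi : i = 0 := by omega
    subst hk; subst hi
    simp only [if_pos rfl, fP]
    norm_num [bi_zero]
  · rw [if_neg (by omega)]
    have e1 : (k:ℤ) + i = ((k+i : ℕ) : ℤ) := by push_cast; ring
    have e2 : (k:ℤ) + i - 1 = ((k+i-1 : ℕ) : ℤ) := by push_cast [Nat.cast_sub (by omega : 1 ≤ k + i)]; ring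
    rw [fP, e2, e1, bi_natCast, bi_natCast, key_identity i k hik (by omega)]

lemma fP_middle_zero {i : ℕ} {x : ℤ} (h1 : -(i:ℤ) < x) (h2 : x < i) : fP i x = 0 := by
  rw [fP, bi_eq_zero (by omega) (by push_cast; omega),
    bi_eq_zero (by omega) (by push_cast; omega), add_zero]

lemma neg_one_pow_sub_eq (j m : ℕ) (h : m ≤ 2*j) : ((-1:ℚ))^(2*j-m) = (-1)^m := by
  have hb : ((-1:ℚ))^m * ((-1:ℚ))^m = 1 := by
    rw [← pow_add, ← two_mul, pow_mul]; norm_num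
  have ha : ((-1:ℚ))^(2*j-m) * ((-1:ℚ))^m = 1 := by
    rw [← pow_add, (by omega : 2*j - m + m = 2*j), pow_mul]; norm_num
  have := ha.trans hb.symm
  exact mul_right_cancel₀ (by positivity) this

/-- The summand of the full alternating sum. -/
noncomputable def gg (i j : ℕ) : ℕ → ℚ :=
  fun m => (-1:ℚ)^m * ((2*j).choose m) * fP i ((m:ℤ) - j)

lemma gg_sum (i j : ℕ) :
    (Δ_[(1:ℤ)])^[2*j] (fP i) (-(j:ℤ)) = ∑ m ∈ range (2*j+1), gg i j m := by
  rw [fwdDiff_iter_eq_sum_shift]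
  apply Finset.sum_congr rfl
  intro m hm
  rw [Finset.mem_range] at hm
  have hm' : m ≤ 2*j := by omega
  rw [zsmul_eq_mul, gg]
  have harg : -(j:ℤ) + m • (1:ℤ) = (m:ℤ) - j := by
    rw [nsmul_eq_mul, mul_one]; ring
  rw [harg]
  push_cast
  rw [neg_one_pow_sub_eq j m hm']

lemma gg_reflect (i j m : ℕ) (hm : m ≤ 2*j) : gg i j (2*j - m) = gg i j m := by
  rw [gg, gg, Nat.choose_symm hm, neg_one_pow_sub_eq j m hm]
  congr 1
  have harg : ((2*j - m : ℕ) : ℤ) - j = -((m:ℤ) - j) := by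
    push_cast [Nat.cast_sub hm]; ring
  rw [harg, fP_neg]

theorem inverse_matrix_identity (i j : ℕ) (hij : i ≤ j) :
    (∑ k ∈ Finset.Icc i j,
      (-1 : ℚ) ^ (j + k) * (if k + i = 0 then 1 else (2 * k : ℚ) / (k + i)) *
        Nat.choose (k + i) (2 * i) * Nat.choose (2 * j) (k + j)) =
    if i = j then 1 else 0 := by
  set S : ℚ := ∑ k ∈ Finset.Icc i j,
      (-1 : ℚ) ^ (j + k) * (if k + i = 0 then 1 else (2 * k : ℚ) / (k + i)) *
        Nat.choose (k + i) (2 * i) * Nat.choose (2 * j) (k + j) with hS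
  -- the full alternating sum
  have key : ∑ m ∈ range (2*j+1), gg i j m = if i = j then 2 else 0 := by
    rw [← gg_sum]
    rcases eq_or_lt_of_le hij with h | h
    · subst h
      rw [if_pos rfl, fwdDiff_iter_fP_eq]
    · rw [if_neg (by omega), fwdDiff_iter_fP_lt h]
  -- split the range
  set B : ℚ := ∑ m ∈ Ico (i+j) (2*j+1), gg i j m with hBdef
  set A : ℚ := ∑ m ∈ Ico 0 (i+j), gg i j m with hAdef
  have hsplit : ∑ m ∈ range (2*j+1), gg i j m = A + B := by
    rw [Finset.range_eq_Ico, ← Finset.sum_Ico_consecutive (gg i j)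
      (Nat.zero_le (i+j)) (by omega : i+j ≤ 2*j+1)]
  -- reflection of A
  have hA : A = ∑ m ∈ Ico (2*j+1-(i+j)) (2*j+1), gg i j m := by
    rw [hAdef]
    have h1 : ∀ t ∈ Ico 0 (i+j), gg i j t = gg i j (2*j - t) := by
      intro t ht
      rw [Finset.mem_Ico] at ht
      rw [gg_reflect i j t (by omega)]
    rw [Finset.sum_congr rfl h1, Finset.sum_Ico_reflect (gg i j) 0 (by omega : i+j ≤ 2*j+1)]
    norm_num
  -- B equals S plus a correction term
  have hB : B = S + (if i = 0 then (-1:ℚ)^j * ((2*j).choose j) else 0) := by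
    have hmap : Ico (i+j) (2*j+1) = (Finset.Icc i j).map (addRightEmbedding j) := by
      rw [Finset.Ico_add_one_right_eq_Icc, Finset.map_add_right_Icc]
      congr 1
      ring
    rw [hBdef, hmap, Finset.sum_map]
    have hterm : ∀ k ∈ Finset.Icc i j,
        gg i j (addRightEmbedding j k) =
          (-1 : ℚ) ^ (j + k) * (if k + i = 0 then 1 else (2 * k : ℚ) / (k + i)) *
            Nat.choose (k + i) (2 * i) * Nat.choose (2 * j) (k + j) +
          (if k + i = 0 then (-1:ℚ)^j * ((2*j).choose j) else 0) := by
      intro k hk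
      rw [Finset.mem_Icc] at hk
      have hemb : addRightEmbedding j k = k + j := rfl
      have harg : ((k + j : ℕ) : ℤ) - j = ((k:ℕ) : ℤ) := by push_cast; ring
      rw [hemb, gg, harg, fP_natCast i k hk.1]
      rcases Nat.eq_zero_or_pos (k+i) with h0 | h0
      · have hk0 : k = 0 := by omega
        have hi0 : i = 0 := by omega
        subst hk0; subst hi0
        norm_num
        ring
      · rw [if_neg (by omega), if_neg (by omega), if_neg (by omega)]
        rw [add_comm k j]
        ring
    rw [Finset.sum_congr rfl hterm, Finset.sum_add_distrib, hS]
    congr 1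
    rcases Nat.eq_zero_or_pos i with hi0 | hi0
    · subst hi0
      rw [if_pos rfl]
      have : ∀ k ∈ Finset.Icc 0 j, (if k + 0 = 0 then (-1:ℚ)^j * ((2*j).choose j) else 0)
          = (if k = 0 then (-1:ℚ)^j * ((2*j).choose j) else 0) := by
        intro k _; simp
      rw [Finset.sum_congr rfl this, Finset.sum_ite_eq' (Finset.Icc 0 j) 0
        (fun _ => (-1:ℚ)^j * ((2*j).choose j))]
      rw [if_pos (by simp)]
    · rw [if_neg (by omega)]
      apply Finset.sum_eq_zero
      intro k _
      rw [if_neg (by omega)]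
  -- case split on i
  rcases Nat.eq_zero_or_pos i with hi0 | hi0
  · -- i = 0
    subst hi0
    have hbound : 2*j+1-(0+j) = j+1 := by omega
    rw [hbound] at hA
    have hBA : B = gg 0 j j + A := by
      rw [hBdef, hA, zero_add, Finset.sum_eq_sum_Ico_succ_bot (by omega : j < 2*j+1)]
    have hgj : gg 0 j j = 2 * ((-1:ℚ)^j * ((2*j).choose j)) := by
      rw [gg]
      have harg0 : ((j:ℕ):ℤ) - (j:ℤ) = ((0:ℕ):ℤ) := by push_cast; ring
      rw [harg0, fP_natCast 0 0 le_rfl]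
      norm_num
      ring
    rw [if_pos rfl] at hB
    rw [hsplit] at key
    rcases eq_or_ne (0:ℕ) j with h | h
    · rw [if_pos h]
      subst h
      rw [hS]
      simp
    · rw [if_neg h]
      rw [if_neg h] at key
      linarith [key, hBA, hB, hgj]
  · -- i ≥ 1
    have hbound : 2*j+1-(i+j) = j-i+1 := by omega
    rw [hbound] at hA
    have hA2 : A = (∑ m ∈ Ico (j-i+1) (i+j), gg i j m) + B := by
      rw [hA, hBdef, Finset.sum_Ico_consecutive (gg i j)
        (by omega : j-i+1 ≤ i+j) (by omega : i+j ≤ 2*j+1)]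
    have hmid : (∑ m ∈ Ico (j-i+1) (i+j), gg i j m) = 0 := by
      apply Finset.sum_eq_zero
      intro m hm
      rw [Finset.mem_Ico] at hm
      rw [gg, fP_middle_zero (by omega) (by omega), mul_zero]
    rw [if_neg (by omega)] at hB
    rw [add_zero] at hB
    rw [hsplit, hA2, hmid, zero_add, hB] at key
    rcases eq_or_ne i j with h | h
    · rw [if_pos h] at key ⊢
      linarith
    · rw [if_neg h] at key ⊢
      linarith
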